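/- Assume D is nonexpansive (λ = 1) and 0 < γ ≤ 1/(L+2τ). Let x* ∈ E satisfy G(x*) = 0, let R > 0, and let x ∈ E satisfy ‖x − x*‖ ≤ R. Then ‖x − γ·Ĝ(x) − x*‖² ≤ ‖x − x*‖² − (γ/(L+2τ))·‖G(x)‖² + 2γτσεR + γ²τ²σ²ε². -/

import Mathlib

open Set

variable {E : Type*} [NormedAddCommGroup E] [InnerProductSpace ℝ E] [CompleteSpace E]

local notation "⟪" a ", " b "⟫" => @inner ℝ _ _ a b

lemma lineDeriv' {g : E → ℝ} {g' : E → E} (hgrad : ∀ z, HasGradientAt g (g' z) z)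
    (x v : E) (t : ℝ) :
    HasDerivAt (fun s : ℝ => g (x + s • v)) ⟪g' (x + t • v), v⟫ t := by
  have h1 : HasDerivAt (fun s : ℝ => x + s • v) v t := by
    simpa using ((hasDerivAt_id t).smul_const v).const_add x
  have h2 := (hasGradientAt_iff_hasFDerivAt.mp (hgrad (x + t • v))).comp_hasDerivAt t h1
  simp at h2
  exact h2

lemma lineConvex {g : E → ℝ} (hgconv : ConvexOn ℝ Set.univ g) (x v : E) :
    ConvexOn ℝ Set.univ (fun t : ℝ => g (x + t • v)) := by
  refine ⟨convex_univ, fun t1 _ t2 _ a b ha hb hab => ?_⟩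
  have h : x + (a • t1 + b • t2) • v = a • (x + t1 • v) + b • (x + t2 • v) := by
    rw [smul_eq_mul, smul_eq_mul, show a • (x + t1 • v) + b • (x + t2 • v) = (a + b) • x + (a * t1 + b * t2) • v by module,
      hab, one_smul]
  simp only [h]
  exact hgconv.2 (mem_univ _) (mem_univ _) ha hb hab

lemma first_order {g : E → ℝ} {g' : E → E} (hgconv : ConvexOn ℝ Set.univ g)
    (hgrad : ∀ z, HasGradientAt g (g' z) z) (x y : E) :
    g x + ⟪g' x, y - x⟫ ≤ g y := by
  have hφ := lineConvex hgconv x (y - x)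
  have hd := lineDeriv' hgrad x (y - x) 0
  have h0 : x + (0:ℝ) • (y - x) = x := by simp
  rw [h0] at hd
  have := hφ.le_slope_of_hasDerivAt (mem_univ (0:ℝ)) (mem_univ (1:ℝ)) one_pos hd
  simp [slope_def_field, h0] at this
  linarith

lemma descent_lemma {g : E → ℝ} {g' : E → E} {L : ℝ} (hL : 0 < L)
    (hgrad : ∀ z, HasGradientAt g (g' z) z)
    (hgLip : ∀ x y, ‖g' x - g' y‖ ≤ L * ‖x - y‖) (x y : E) :
    g y ≤ g x + ⟪g' x, y - x⟫ + L / 2 * ‖y - x‖ ^ 2 := by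
  set v := y - x with hv
  have hg'cont : Continuous g' := by
    have hlip : LipschitzWith L.toNNReal g' :=
      LipschitzWith.of_dist_le_mul fun a b => by
        rw [dist_eq_norm, dist_eq_norm, Real.coe_toNNReal L hL.le]; exact hgLip a b
    exact hlip.continuous
  have hcont : Continuous fun t : ℝ => ⟪g' (x + t • v), v⟫ :=
    (hg'cont.comp (by continuity)).inner continuous_const
  have key : g (x + (1:ℝ) • v) - g (x + (0:ℝ) • v)
      = ∫ t in (0:ℝ)..1, ⟪g' (x + t • v), v⟫ :=
    (intervalIntegral.integral_eq_sub_of_hasDerivAt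
      (fun t _ => lineDeriv' hgrad x v t) (hcont.intervalIntegrable 0 1)).symm
  have bound : ∀ t ∈ Set.Icc (0:ℝ) 1,
      ⟪g' (x + t • v), v⟫ ≤ ⟪g' x, v⟫ + (L * ‖v‖ ^ 2) * t := by
    intro t ht
    have h1 : ⟪g' (x + t • v) - g' x, v⟫ ≤ ‖g' (x + t • v) - g' x‖ * ‖v‖ :=
      real_inner_le_norm _ _
    have h2 : ‖g' (x + t • v) - g' x‖ ≤ L * (t * ‖v‖) := by
      have := hgLip (x + t • v) x
      simpa [norm_smul, abs_of_nonneg ht.1] using this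
    rw [inner_sub_left] at h1
    nlinarith [norm_nonneg v, mul_le_mul_of_nonneg_right h2 (norm_nonneg v)]
  have hint : (∫ t in (0:ℝ)..1, ⟪g' (x + t • v), v⟫)
      ≤ ∫ t in (0:ℝ)..1, (⟪g' x, v⟫ + (L * ‖v‖ ^ 2) * t) := by
    apply intervalIntegral.integral_mono_on zero_le_one (hcont.intervalIntegrable 0 1)
      ((continuous_const.add (continuous_const.mul continuous_id)).intervalIntegrable 0 1)
      bound
  have hval : (∫ t in (0:ℝ)..1, (⟪g' x, v⟫ + (L * ‖v‖ ^ 2) * t))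
      = ⟪g' x, v⟫ + L / 2 * ‖v‖ ^ 2 := by
    rw [intervalIntegral.integral_add (intervalIntegrable_const)
      ((intervalIntegral.intervalIntegrable_id).const_mul _),
      intervalIntegral.integral_const_mul, integral_id]
    simp; ring
  have hxy : x + (1:ℝ) • v = y := by rw [hv]; module
  have hx0 : x + (0:ℝ) • v = x := by simp
  rw [hxy, hx0] at key
  linarith [key, hint.trans_eq hval]

lemma strong_lower {g : E → ℝ} {g' : E → E} {L : ℝ} (hL : 0 < L)
    (hgconv : ConvexOn ℝ Set.univ g)
    (hgrad : ∀ z, HasGradientAt g (g' z) z)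
    (hgLip : ∀ x y, ‖g' x - g' y‖ ≤ L * ‖x - y‖) (x y : E) :
    g x + ⟪g' x, y - x⟫ + 1 / (2 * L) * ‖g' y - g' x‖ ^ 2 ≤ g y := by
  set w := g' y - g' x with hw
  set z := y - (1 / L) • w with hz
  have h1 := descent_lemma hL hgrad hgLip y z
  have h2 := first_order hgconv hgrad x z
  have hzy : z - y = -((1 / L) • w) := by rw [hz]; module
  have hzx : z - x = (y - x) - (1 / L) • w := by rw [hz]; module
  rw [hzy] at h1
  rw [hzx] at h2
  rw [inner_neg_right, real_inner_smul_right] at h1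
  rw [inner_sub_right, real_inner_smul_right] at h2
  have hnorm : ‖-((1 / L) • w)‖ ^ 2 = (1 / L) ^ 2 * ‖w‖ ^ 2 := by
    rw [norm_neg, norm_smul]
    simp [abs_of_pos (by positivity : (0:ℝ) < 1 / L), mul_pow]
  rw [hnorm] at h1
  have hww : ⟪g' y, w⟫ - ⟪g' x, w⟫ = ‖w‖ ^ 2 := by
    rw [← inner_sub_left, ← hw, real_inner_self_eq_norm_sq]
  have hL' : L ≠ 0 := hL.ne'
  have key : (1 / L) * ⟪g' y, w⟫ - (1 / L) * ⟪g' x, w⟫ = (1 / L) * ‖w‖ ^ 2 := by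
    rw [← mul_sub, hww]
  have e1 : L / 2 * ((1 / L) ^ 2 * ‖w‖ ^ 2) = 1 / (2 * L) * ‖w‖ ^ 2 := by
    field_simp
  have e2 : 1 / L * ‖w‖ ^ 2 = 2 * (1 / (2 * L) * ‖w‖ ^ 2) := by
    field_simp
  linarith [h1, h2, key, e1, e2]

lemma gradient_coco {g : E → ℝ} {g' : E → E} {L : ℝ} (hL : 0 < L)
    (hgconv : ConvexOn ℝ Set.univ g)
    (hgrad : ∀ z, HasGradientAt g (g' z) z)
    (hgLip : ∀ x y, ‖g' x - g' y‖ ≤ L * ‖x - y‖) (x y : E) :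
    (1 / L) * ‖g' x - g' y‖ ^ 2 ≤ ⟪g' x - g' y, x - y⟫ := by
  have h1 := strong_lower hL hgconv hgrad hgLip x y
  have h2 := strong_lower hL hgconv hgrad hgLip y x
  have ha : ⟪g' x, y - x⟫ = ⟪g' x, y⟫ - ⟪g' x, x⟫ := inner_sub_right _ _ _
  have hb : ⟪g' y, x - y⟫ = ⟪g' y, x⟫ - ⟪g' y, y⟫ := inner_sub_right _ _ _
  have hc : ⟪g' x - g' y, x - y⟫
      = ⟪g' x, x⟫ - ⟪g' x, y⟫ - ⟪g' y, x⟫ + ⟪g' y, y⟫ := by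
    rw [inner_sub_left, inner_sub_right, inner_sub_right]; ring
  have hn : ‖g' x - g' y‖ = ‖g' y - g' x‖ := norm_sub_rev _ _
  rw [hn, hc]
  have h2' : ‖g' x - g' y‖ = ‖g' y - g' x‖ := norm_sub_rev _ _
  have hn2 : ‖g' x - g' y‖ ^ 2 = ‖g' y - g' x‖ ^ 2 := by rw [hn]
  rw [hn2] at h2
  have e2 : 1 / L * ‖g' y - g' x‖ ^ 2 = 2 * (1 / (2 * L) * ‖g' y - g' x‖ ^ 2) := by
    field_simp
  rw [ha] at h1; rw [hb] at h2
  linarith [h1, h2, e2]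

set_option maxHeartbeats 1000000 in
theorem sdred_one_step_nonexpansive {n : ℕ}
    (g : EuclideanSpace ℝ (Fin n) → ℝ)
    (g' D Dh G Gh : EuclideanSpace ℝ (Fin n) → EuclideanSpace ℝ (Fin n))
    (L σ ε τ γ R : ℝ)
    (hL : 0 < L)
    (hgconv : ConvexOn ℝ Set.univ g)
    (hgrad : ∀ x, HasGradientAt g (g' x) x)
    (hgLip : ∀ x y, ‖g' x - g' y‖ ≤ L * ‖x - y‖)
    (hD : ∀ x y, ‖D x - D y‖ ≤ ‖x - y‖)
    (hσ : 0 < σ) (hε : 0 < ε)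
    (hmis : ∀ x, ‖Dh x - D x‖ ≤ σ * ε)
    (hτ : 0 < τ)
    (hG : ∀ x, G x = g' x + τ • (x - D x))
    (hGh : ∀ x, Gh x = g' x + τ • (x - Dh x))
    (hγ0 : 0 < γ) (hγ : γ ≤ 1 / (L + 2 * τ))
    (xstar : EuclideanSpace ℝ (Fin n)) (hstar : G xstar = 0)
    (hR : 0 < R)
    (x : EuclideanSpace ℝ (Fin n)) (hx : ‖x - xstar‖ ≤ R) :
    ‖x - γ • Gh x - xstar‖ ^ 2
      ≤ ‖x - xstar‖ ^ 2 - (γ / (L + 2 * τ)) * ‖G x‖ ^ 2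
          + 2 * γ * τ * σ * ε * R + γ ^ 2 * τ ^ 2 * σ ^ 2 * ε ^ 2 := by
  have hLτ : (0:ℝ) < L + 2 * τ := by linarith
  set u := x - xstar with hu
  set a := g' x - g' xstar with ha
  set b := (x - D x) - (xstar - D xstar) with hb
  set d := D x - D xstar with hd
  -- G x in terms of a, b
  have h0 : g' xstar + τ • (xstar - D xstar) = 0 := by rw [← hG]; exact hstar
  have hGx : G x = a + τ • b := by
    have h : a + τ • b = (g' x + τ • (x - D x)) - (g' xstar + τ • (xstar - D xstar)) := by
      rw [ha, hb]; module
    rw [h, h0, sub_zero, ← hG]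
  -- cocoercivity of g'
  have hca : (1 / L) * ‖a‖ ^ 2 ≤ ⟪a, u⟫ := gradient_coco hL hgconv hgrad hgLip x xstar
  -- cocoercivity of I - D
  have hcb : (1 / 2) * ‖b‖ ^ 2 ≤ ⟪b, u⟫ := by
    have hbud : b = u - d := by rw [hb, hd, hu]; module
    have hDle : ‖d‖ ≤ ‖u‖ := hD x xstar
    have h1 : ⟪b, u⟫ = ‖u‖ ^ 2 - ⟪d, u⟫ := by
      rw [hbud, inner_sub_left, real_inner_self_eq_norm_sq]
    have h2 : ‖b‖ ^ 2 = ‖u‖ ^ 2 - 2 * ⟪d, u⟫ + ‖d‖ ^ 2 := by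
      rw [hbud]
      rw [norm_sub_sq_real, real_inner_comm]
    rw [h1, h2]
    nlinarith [norm_nonneg u, norm_nonneg d]
  -- combined cocoercivity
  have hGxu : (1 / (L + 2 * τ)) * ‖G x‖ ^ 2 ≤ ⟪G x, u⟫ := by
    have hinab : ⟪a, b⟫ ≤ ‖a‖ * ‖b‖ := real_inner_le_norm a b
    have hGxn : ‖G x‖ ^ 2 = ‖a‖ ^ 2 + 2 * τ * ⟪a, b⟫ + τ ^ 2 * ‖b‖ ^ 2 := by
      rw [hGx, norm_add_sq_real, real_inner_smul_right, norm_smul]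
      rw [Real.norm_eq_abs, abs_of_pos hτ]
      ring
    have hGxi : ⟪G x, u⟫ = ⟪a, u⟫ + τ * ⟪b, u⟫ := by
      rw [hGx, inner_add_left, real_inner_smul_left]
    rw [hGxn, hGxi, div_mul_eq_mul_div, div_le_iff₀ hLτ]
    have hA : ‖a‖ ^ 2 ≤ L * ⟪a, u⟫ := by
      rw [div_mul_eq_mul_div, div_le_iff₀ hL] at hca; linarith [hca]
    have hB : ‖b‖ ^ 2 ≤ 2 * ⟪b, u⟫ := by linarith [hcb]
    rw [← mul_le_mul_iff_right₀ hL]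
    have t1 := mul_le_mul_of_nonneg_left hA hL.le
    have t2 := mul_le_mul_of_nonneg_left hA (by positivity : (0:ℝ) ≤ 2 * τ)
    have t3 := mul_le_mul_of_nonneg_left hB (by positivity : (0:ℝ) ≤ τ ^ 2 * L)
    have t4 := mul_le_mul_of_nonneg_left hB (by positivity : (0:ℝ) ≤ τ * L ^ 2 / 2)
    have t5 := mul_le_mul_of_nonneg_left hinab (by positivity : (0:ℝ) ≤ 2 * τ * L)
    have t6 := mul_nonneg (by positivity : (0:ℝ) ≤ τ / 2) (sq_nonneg (2 * ‖a‖ - L * ‖b‖))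
    linarith [t1, t2, t3, t4, t5, t6]
  -- the error term
  set e := τ • (D x - Dh x) with he
  have hGhx : Gh x = G x + e := by rw [hGh, hG, he]; module
  have hen : ‖e‖ ≤ τ * (σ * ε) := by
    rw [he, norm_smul, Real.norm_eq_abs, abs_of_pos hτ]
    have := hmis x
    rw [norm_sub_rev] at this
    exact mul_le_mul_of_nonneg_left this hτ.le
  set y := u - γ • G x with hy
  have hstep1 : ‖y‖ ^ 2 = ‖u‖ ^ 2 - 2 * γ * ⟪G x, u⟫ + γ ^ 2 * ‖G x‖ ^ 2 := by
    rw [hy, norm_sub_sq_real, real_inner_smul_right, norm_smul, Real.norm_eq_abs,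
      abs_of_pos hγ0, real_inner_comm]
    ring
  set c := 1 / (L + 2 * τ) with hc
  have hc0 : 0 < c := by positivity
  have hstep2 : ‖y‖ ^ 2 ≤ ‖u‖ ^ 2 - γ * c * ‖G x‖ ^ 2 := by
    rw [hstep1]
    nlinarith [mul_le_mul_of_nonneg_left hGxu hγ0.le,
      mul_le_mul_of_nonneg_right (mul_le_mul_of_nonneg_left hγ hγ0.le) (sq_nonneg ‖G x‖),
      sq_nonneg ‖G x‖]
  have hyR : ‖y‖ ≤ R := by
    have h1 : ‖y‖ ^ 2 ≤ R ^ 2 := by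
      have : ‖u‖ ^ 2 ≤ R ^ 2 := by nlinarith [norm_nonneg u, hx]
      nlinarith [hstep2, sq_nonneg ‖G x‖, mul_nonneg hγ0.le hc0.le,
        mul_nonneg (mul_nonneg hγ0.le hc0.le) (sq_nonneg ‖G x‖)]
    calc ‖y‖ = Real.sqrt (‖y‖ ^ 2) := by rw [Real.sqrt_sq (norm_nonneg y)]
      _ ≤ Real.sqrt (R ^ 2) := Real.sqrt_le_sqrt h1
      _ = R := Real.sqrt_sq hR.le
  have hlhs : x - γ • Gh x - xstar = y - γ • e := by
    rw [hy, hu, hGhx]; module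
  rw [hlhs]
  have hexp : ‖y - γ • e‖ ^ 2 = ‖y‖ ^ 2 - 2 * γ * ⟪y, e⟫ + γ ^ 2 * ‖e‖ ^ 2 := by
    rw [norm_sub_sq_real, real_inner_smul_right, norm_smul, Real.norm_eq_abs,
      abs_of_pos hγ0]
    ring
  rw [hexp]
  have hie : -⟪y, e⟫ ≤ ‖y‖ * ‖e‖ := by
    have := real_inner_le_norm y (-e)
    rw [inner_neg_right, norm_neg] at this
    linarith
  have hen0 : 0 ≤ ‖e‖ := norm_nonneg e
  have hye : ‖y‖ * ‖e‖ ≤ R * (τ * (σ * ε)) :=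
    mul_le_mul hyR hen hen0 hR.le
  have he2 : ‖e‖ ^ 2 ≤ (τ * (σ * ε)) ^ 2 := pow_le_pow_left₀ hen0 hen 2
  have hgoal : γ / (L + 2 * τ) = γ * c := by rw [hc]; ring
  rw [hgoal]
  have h2g : 2 * γ * (-⟪y, e⟫) ≤ 2 * γ * (R * (τ * (σ * ε))) :=
    mul_le_mul_of_nonneg_left (hie.trans hye) (by positivity)
  have h3g : γ ^ 2 * ‖e‖ ^ 2 ≤ γ ^ 2 * (τ * (σ * ε)) ^ 2 :=
    mul_le_mul_of_nonneg_left he2 (sq_nonneg γ)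
  have : ‖u‖ ^ 2 = ‖x - xstar‖ ^ 2 := by rw [hu]
  linarith [hstep2, h2g, h3g]
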